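/- Let G be the graph on [n]⁷ with x ~ y iff ρ(x,y) ∈ S, where S = Q₇ \ [(1⁴ × Q₃⁻) ∪ {0⁷} ∪ {0⁴ × 1³}]. Then the edges of G can be partitioned into at most 30·n⁵ complete bipartite subgraphs, i.e., bp(G) ≤ 30n⁵. -/

import Mathlib

/-- `crossAdj U W u v` : `u` and `v` are on opposite sides of the biclique `B(U,W)`. -/
def crossAdj {V : Type*} (U W : Set V) (u v : V) : Prop :=
  (u ∈ U ∧ v ∈ W) ∨ (u ∈ W ∧ v ∈ U)

/-- `B` is a partition of the edge set of `G` into `k` complete bipartite graphs: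
every cross pair of each biclique is an edge of `G`, and every edge of `G` lies in
exactly one of the bicliques. -/
def IsBicliquePartition {V : Type*} (G : SimpleGraph V) {k : ℕ}
    (B : Fin k → Set V × Set V) : Prop :=
  (∀ i, Disjoint (B i).1 (B i).2) ∧
  (∀ i, ∀ u v, crossAdj (B i).1 (B i).2 u v → G.Adj u v) ∧
  (∀ u v, G.Adj u v → ∃! i, crossAdj (B i).1 (B i).2 u v)

/-- `Q₃⁻ = {0,1}³ \ {0³, 1³}` does not appear directly here; `Sset` is
`S = Q₇ \ [(1⁴ × Q₃⁻) ∪ {0⁷} ∪ {0⁴ × 1³}]`, where the first four coordinates play the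
role of `Q₄` and the last three of `Q₃`. -/
def Sset : Set (Fin 7 → Bool) :=
  {v | ¬ (((∀ i : Fin 7, i.val < 4 → v i = true) ∧
            ¬ (∀ i j : Fin 7, 4 ≤ i.val → 4 ≤ j.val → v i = v j))
        ∨ (∀ i, v i = false)
        ∨ ((∀ i : Fin 7, i.val < 4 → v i = false) ∧
           (∀ i : Fin 7, 4 ≤ i.val → v i = true)))}

/-- The difference pattern `ρ(x,y) ∈ {0,1}⁷` of `x, y ∈ [n]⁷` : the `i`-th coordinate is
`true` iff `xᵢ ≠ yᵢ`. -/
def rho {n : ℕ} (x y : Fin 7 → Fin n) : Fin 7 → Bool :=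
  fun i => decide (x i ≠ y i)

/-- The counterexample graph on `[n]⁷`: `x ~ y` iff `ρ(x,y) ∈ S`. -/
def Gcex (n : ℕ) : SimpleGraph (Fin 7 → Fin n) where
  Adj x y := rho x y ∈ Sset
  symm := by
    constructor
    intro x y h
    have e : rho y x = rho x y := funext fun i => by simp [rho, ne_comm]
    rwa [e]
  loopless := by
    constructor
    intro x h
    exact h (Or.inr (Or.inl (fun i => by simp [rho])))

namespace BpAux

def cubeE : Fin 30 → Fin 5 → Fin 7 :=
  ![![2, 3, 4, 5, 6],
    ![2, 3, 4, 5, 6],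
    ![0, 3, 4, 5, 6],
    ![0, 1, 4, 5, 6],
    ![0, 3, 4, 5, 6],
    ![0, 3, 4, 5, 6],
    ![0, 1, 4, 5, 6],
    ![0, 3, 4, 5, 6],
    ![0, 1, 3, 5, 6],
    ![0, 1, 3, 5, 6],
    ![0, 1, 2, 3, 6],
    ![0, 1, 3, 4, 6],
    ![1, 3, 4, 5, 6],
    ![1, 2, 3, 4, 5],
    ![0, 1, 4, 5, 6],
    ![0, 1, 3, 4, 5],
    ![0, 1, 2, 4, 5],
    ![0, 2, 3, 4, 5],
    ![1, 2, 3, 5, 6],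
    ![0, 2, 3, 5, 6],
    ![0, 1, 2, 5, 6],
    ![0, 2, 3, 4, 6],
    ![0, 3, 4, 5, 6],
    ![0, 1, 4, 5, 6],
    ![0, 3, 4, 5, 6],
    ![1, 3, 4, 5, 6],
    ![0, 1, 3, 5, 6],
    ![0, 1, 2, 4, 6],
    ![1, 2, 3, 4, 6],
    ![0, 1, 2, 3, 6]]

def cubeA : Fin 30 → Fin 5 → Bool :=
  ![![true, true, true, true, true],
    ![true, true, false, false, false],
    ![false, true, false, false, true],
    ![true, false, false, false, true],
    ![false, false, false, false, true],
    ![false, true, false, true, true],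
    ![true, false, false, true, true],
    ![false, false, false, true, true],
    ![true, true, false, true, true],
    ![true, true, false, false, true],
    ![true, true, false, true, true],
    ![true, false, false, true, true],
    ![false, true, true, false, true],
    ![false, false, true, true, true],
    ![false, true, true, false, true],
    ![false, false, false, true, false],
    ![false, true, false, true, true],
    ![false, true, false, true, true],
    ![false, false, false, true, false],
    ![false, true, true, true, false],
    ![true, false, true, true, false],
    ![false, true, false, false, false],
    ![false, true, true, false, false],
    ![true, false, true, false, false],
    ![true, false, false, false, false],
    ![true, false, true, false, false],
    ![true, true, false, true, false],
    ![false, true, false, false, false],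
    ![false, false, true, false, false],
    ![true, true, false, true, false]]


/-- membership of a pattern in the `i`-th two-dimensional subcube -/
def cubeMem (i : Fin 30) (v : Fin 7 → Bool) : Prop :=
  ∀ m : Fin 5, v (cubeE i m) = cubeA i m

instance (i : Fin 30) (v : Fin 7 → Bool) : Decidable (cubeMem i v) := by
  unfold cubeMem; infer_instance

/-- explicit decidable version of membership in `Sset` -/
def SsetP (v : Fin 7 → Bool) : Prop :=
  ¬ (((∀ i : Fin 7, i.val < 4 → v i = true) ∧
            ¬ (∀ i j : Fin 7, 4 ≤ i.val → 4 ≤ j.val → v i = v j))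
        ∨ (∀ i, v i = false)
        ∨ ((∀ i : Fin 7, i.val < 4 → v i = false) ∧
           (∀ i : Fin 7, 4 ≤ i.val → v i = true)))

instance (v : Fin 7 → Bool) : Decidable (SsetP v) := by
  unfold SsetP; infer_instance

lemma mem_Sset_iff (v : Fin 7 → Bool) : v ∈ Sset ↔ SsetP v := Iff.rfl

set_option maxRecDepth 100000 in
set_option maxHeartbeats 4000000 in
lemma L1 : ∀ v : Fin 7 → Bool, SsetP v → ∃ i, cubeMem i v := by decide

set_option maxRecDepth 100000 in
set_option maxHeartbeats 4000000 in
lemma L2 : ∀ (v : Fin 7 → Bool) (i : Fin 30), cubeMem i v → SsetP v := by decide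

set_option maxRecDepth 100000 in
set_option maxHeartbeats 4000000 in
lemma L3 : ∀ (v : Fin 7 → Bool) (i j : Fin 30), cubeMem i v → cubeMem j v → i = j := by
  decide

set_option maxRecDepth 100000 in
set_option maxHeartbeats 4000000 in
lemma L4 : ∀ i : Fin 30, ∃ m, cubeA i m = true := by decide

/-- numeric encoding of a vector in `[n]⁵`, used as a linear order -/
def ord {n : ℕ} (w : Fin 5 → Fin n) : ℕ := (finFunctionFinEquiv w : Fin (n ^ 5)).val

lemma ord_inj {n : ℕ} : Function.Injective (ord (n := n)) := fun a b h =>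
  finFunctionFinEquiv.injective (Fin.val_injective h)

/-- restriction of `x : [n]⁷` to the five fixed coordinates of cube `i` -/
def proj {n : ℕ} (i : Fin 30) (x : Fin 7 → Fin n) : Fin 5 → Fin n :=
  fun m => x (cubeE i m)

/-- the biclique associated to cube `i` and base point `w` -/
def Bic (n : ℕ) (i : Fin 30) (w : Fin 5 → Fin n) :
    Set (Fin 7 → Fin n) × Set (Fin 7 → Fin n) :=
  ({x | proj i x = w},
   {y | ord w < ord (proj i y) ∧ ∀ m, (w m ≠ proj i y m ↔ cubeA i m = true)})

lemma cube_of_cross {n : ℕ} {i : Fin 30} {w : Fin 5 → Fin n} {x y : Fin 7 → Fin n}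
    (hx : x ∈ (Bic n i w).1) (hy : y ∈ (Bic n i w).2) : cubeMem i (rho x y) := by
  intro m
  have hxm : proj i x m = w m := congrFun hx m
  have hiff := hy.2 m
  show decide (x (cubeE i m) ≠ y (cubeE i m)) = cubeA i m
  by_cases hxy : x (cubeE i m) = y (cubeE i m)
  · have h1 : w m = proj i y m := by rw [← hxm]; exact hxy
    have ha : cubeA i m = false := by
      rcases Bool.eq_false_or_eq_true (cubeA i m) with h | h
      · exact absurd h1 (hiff.mpr h)
      · exact h
    rw [ha]
    exact decide_eq_false (not_not_intro hxy)
  · have h2 : w m ≠ proj i y m := by rw [← hxm]; exact hxy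
    rw [hiff.mp h2]
    exact decide_eq_true hxy

lemma iff_of_cubeMem {n : ℕ} {i : Fin 30} {x y : Fin 7 → Fin n}
    (hi : cubeMem i (rho x y)) (m : Fin 5) :
    proj i x m ≠ proj i y m ↔ cubeA i m = true := by
  constructor
  · intro h
    rw [← hi m]
    exact decide_eq_true h
  · intro h
    have := hi m
    rw [h] at this
    exact of_decide_eq_true this

lemma adj_of_cross {n : ℕ} {i : Fin 30} {w : Fin 5 → Fin n} {x y : Fin 7 → Fin n}
    (h : crossAdj (Bic n i w).1 (Bic n i w).2 x y) : (Gcex n).Adj x y := by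
  rcases h with ⟨hx, hy⟩ | ⟨hx, hy⟩
  · exact L2 _ _ (cube_of_cross hx hy)
  · exact ((Gcex n).adj_symm (L2 _ _ (cube_of_cross hy hx)))

lemma rho_comm {n : ℕ} (x y : Fin 7 → Fin n) : rho y x = rho x y :=
  funext fun i => by simp [rho, ne_comm]

end BpAux

open BpAux in
/-- The edges of the counterexample graph `G` on `[n]⁷` can be partitioned into at most
`30 · n⁵` complete bipartite subgraphs, i.e. `bp(G) ≤ 30n⁵`. -/
theorem bp_Gcex_le (n : ℕ) :
    ∃ k ≤ 30 * n ^ 5, ∃ B : Fin k → Set (Fin 7 → Fin n) × Set (Fin 7 → Fin n),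
      IsBicliquePartition (Gcex n) B := by
  refine ⟨30 * n ^ 5, le_refl _, ?_⟩
  -- equivalence between the index set and `Fin (30 * n ^ 5)`
  let e : Fin (30 * n ^ 5) ≃ Fin 30 × (Fin 5 → Fin n) :=
    finProdFinEquiv.symm.trans
      ((Equiv.refl (Fin 30)).prodCongr finFunctionFinEquiv.symm)
  refine ⟨fun j => Bic n (e j).1 (e j).2, ?_, ?_, ?_⟩
  · -- disjointness
    intro j
    rw [Set.disjoint_left]
    rintro x hx ⟨hlt, -⟩
    rw [show proj (e j).1 x = (e j).2 from hx] at hlt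
    exact lt_irrefl _ hlt
  · intro j u v h
    exact adj_of_cross h
  · -- existence and uniqueness
    intro x y hadj
    have hS : SsetP (rho x y) := hadj
    obtain ⟨i, hi⟩ := L1 _ hS
    -- the two projections differ
    have hne : ord (proj i x) ≠ ord (proj i y) := by
      intro h
      obtain ⟨m, hm⟩ := L4 i
      have h1 : rho x y (cubeE i m) = true := by rw [hi m, hm]
      have h2 : x (cubeE i m) ≠ y (cubeE i m) := of_decide_eq_true h1
      exact h2 (congrFun (ord_inj h) m)
    -- key : the cross condition for index `(j, w)` forces `j = i` and pins down `w`
    have main : ∀ (j : Fin 30) (w : Fin 5 → Fin n),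
        crossAdj (Bic n j w).1 (Bic n j w).2 x y →
        j = i ∧ ((w = proj i x ∧ ord (proj i x) < ord (proj i y)) ∨
                 (w = proj i y ∧ ord (proj i y) < ord (proj i x))) := by
      intro j w h
      rcases h with ⟨hx, hy⟩ | ⟨hy, hx⟩
      · have hj : j = i := L3 _ _ _ (cube_of_cross hx hy) hi
        subst hj
        exact ⟨rfl, Or.inl ⟨hx.symm, by rw [show proj j x = w from hx]; exact hy.1⟩⟩
      · have hcm : cubeMem j (rho y x) := cube_of_cross hx hy
        rw [rho_comm] at hcm
        have hj : j = i := L3 _ _ _ hcm hi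
        subst hj
        exact ⟨rfl, Or.inr ⟨hx.symm, by rw [show proj j y = w from hx]; exact hy.1⟩⟩
    -- construct the witness index
    rcases lt_or_gt_of_ne hne with hlt | hlt
    · -- `x`-side is smaller
      refine ⟨e.symm (i, proj i x), ?_, ?_⟩
      · simp only [Equiv.apply_symm_apply]
        exact Or.inl ⟨rfl, hlt, fun m => iff_of_cubeMem hi m⟩
      · intro j hj
        obtain ⟨hji, hw⟩ := main (e j).1 (e j).2 hj
        have : (e j) = (i, proj i x) := by
          rcases hw with ⟨hw, -⟩ | ⟨hw, hbad⟩
          · exact Prod.ext hji hw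
          · exact absurd hlt (not_lt_of_gt hbad)
        rw [← this, e.symm_apply_apply]
    · -- `y`-side is smaller
      refine ⟨e.symm (i, proj i y), ?_, ?_⟩
      · simp only [Equiv.apply_symm_apply]
        exact Or.inr ⟨⟨hlt, fun m => ne_comm.trans (iff_of_cubeMem hi m)⟩, rfl⟩
      · intro j hj
        obtain ⟨hji, hw⟩ := main (e j).1 (e j).2 hj
        have : (e j) = (i, proj i y) := by
          rcases hw with ⟨hw, hbad⟩ | ⟨hw, -⟩
          · exact absurd hlt (not_lt_of_gt hbad)
          · exact Prod.ext hji hw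
        rw [← this, e.symm_apply_apply]
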